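/- Let J be a finite graph, and suppose each edge ij of J is assigned a set R_{ij} ⊆ V(J) \ {i,j} with |R_{ij}| ≤ N for some integer N ≥ 0. Suppose there is a real number β ≥ 0 such that every subgraph J' of J with the property that for every edge ij of J', no vertex of R_{ij} lies in V(J') has edge density at most β. Then J has edge density at most β·e·(N+1). -/

import Mathlib

open Finset

lemma sumA {V : Type*} [Fintype V] [DecidableEq V] (p q : ℝ) (hpq : p + q = 1)
    (A B : Finset V) (hAB : Disjoint A B)
    [∀ S : Finset V, Decidable (A ⊆ S ∧ ∀ b ∈ B, b ∉ S)] :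
    ∑ S ∈ (Finset.univ : Finset V).powerset,
      ((∏ _v ∈ S, p) * ∏ _v ∈ Finset.univ \ S, q) *
        (if A ⊆ S ∧ ∀ b ∈ B, b ∉ S then (1:ℝ) else 0)
      = p ^ A.card * q ^ B.card := by
  classical
  have key : ∀ S ∈ (Finset.univ : Finset V).powerset,
      ((∏ _v ∈ S, p) * ∏ _v ∈ Finset.univ \ S, q) *
        (if A ⊆ S ∧ ∀ b ∈ B, b ∉ S then (1:ℝ) else 0)
      = (∏ v ∈ S, (if v ∈ B then (0:ℝ) else p)) *
        ∏ v ∈ Finset.univ \ S, (if v ∈ A then (0:ℝ) else q) := by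
    intro S _
    by_cases h : A ⊆ S ∧ ∀ b ∈ B, b ∉ S
    · rw [if_pos h, mul_one]
      congr 1
      · exact Finset.prod_congr rfl fun v hv => (if_neg (fun hvB => h.2 v hvB hv)).symm
      · refine Finset.prod_congr rfl fun v hv => (if_neg fun hvA => ?_).symm
        exact (Finset.mem_sdiff.mp hv).2 (h.1 hvA)
    · rw [if_neg h, mul_zero]
      rw [not_and_or] at h
      rcases h with h | h
      · rw [Finset.not_subset] at h
        obtain ⟨a, haA, haS⟩ := h
        have : (∏ v ∈ Finset.univ \ S, (if v ∈ A then (0:ℝ) else q)) = 0 :=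
          Finset.prod_eq_zero (Finset.mem_sdiff.mpr ⟨Finset.mem_univ a, haS⟩) (if_pos haA)
        rw [this, mul_zero]
      · push_neg at h
        obtain ⟨b, hbB, hbS⟩ := h
        have : (∏ v ∈ S, (if v ∈ B then (0:ℝ) else p)) = 0 :=
          Finset.prod_eq_zero hbS (if_pos hbB)
        rw [this, zero_mul]
  rw [Finset.sum_congr rfl key, ← Finset.prod_add]
  have habu : A ∪ B ⊆ Finset.univ := Finset.subset_univ _
  rw [← Finset.prod_sdiff habu]
  have h1 : (∏ v ∈ Finset.univ \ (A ∪ B),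
      ((if v ∈ B then (0:ℝ) else p) + if v ∈ A then (0:ℝ) else q)) = 1 := by
    apply Finset.prod_eq_one
    intro v hv
    rw [Finset.mem_sdiff, Finset.mem_union] at hv
    push_neg at hv
    rw [if_neg hv.2.2, if_neg hv.2.1, hpq]
  rw [h1, one_mul, Finset.prod_union hAB]
  congr 1
  · rw [← Finset.prod_const]
    apply Finset.prod_congr rfl
    intro v hv
    rw [if_neg (Finset.disjoint_left.mp hAB hv), if_pos hv, add_zero]
  · rw [← Finset.prod_const]
    apply Finset.prod_congr rfl
    intro v hv
    rw [if_pos hv, if_neg (Finset.disjoint_right.mp hAB hv), zero_add]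
open Finset

/-- The sampled subgraph: vertices `S`, edges of `J` inside `S` avoiding `R`. -/
def stmt7Sub {V : Type*} (J : SimpleGraph V) (R : V → V → Set V) (S : Finset V) :
    J.Subgraph where
  verts := ↑S
  Adj i j := J.Adj i j ∧ i ∈ S ∧ j ∈ S ∧ (∀ ℓ ∈ R i j, ℓ ∉ S) ∧ (∀ ℓ ∈ R j i, ℓ ∉ S)
  adj_sub h := h.1
  edge_vert h := h.2.1
  symm := ⟨fun i j h => ⟨h.1.symm, h.2.2.1, h.2.1, h.2.2.2.2, h.2.2.2.1⟩⟩

theorem stmt7 {V : Type*} [Fintype V] [Nonempty V] (J : SimpleGraph V) (N : ℕ)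
    (β : ℝ) (hβ : 0 ≤ β)
    (R : V → V → Set V) (hsymm : ∀ i j, R i j = R j i)
    (hnotin : ∀ i j, J.Adj i j → i ∉ R i j ∧ j ∉ R i j)
    (hcard : ∀ i j, J.Adj i j → (R i j).ncard ≤ N)
    (hsub : ∀ J' : J.Subgraph,
      (∀ i j, J'.Adj i j → ∀ ℓ ∈ R i j, ℓ ∉ J'.verts) →
      J'.verts.Nonempty → (J'.edgeSet.ncard : ℝ) ≤ β * J'.verts.ncard) :
    (J.edgeSet.ncard : ℝ) ≤ β * Real.exp 1 * ((N : ℝ) + 1) * Fintype.card V := by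
  classical
  set n : ℕ := Fintype.card V with hn
  set p : ℝ := 1 / ((N : ℝ) + 1) with hp
  set q : ℝ := 1 - p with hq
  have hNpos : (0:ℝ) < (N : ℝ) + 1 := by positivity
  have hp_pos : 0 < p := by positivity
  have hpq : p + q = 1 := by rw [hq]; ring
  have hp_le_one : p ≤ 1 := by
    rw [hp, div_le_one hNpos]; linarith [Nat.cast_nonneg (α := ℝ) N]
  have hq_nonneg : 0 ≤ q := by rw [hq]; linarith
  have hq_le_one : q ≤ 1 := by rw [hq]; linarith
  set G : Finset V → J.Subgraph := fun S => stmt7Sub J R S with hG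
  set w : Finset V → ℝ := fun S => (∏ _v ∈ S, p) * ∏ _v ∈ Finset.univ \ S, q with hwdef
  have hw : ∀ S, 0 ≤ w S := fun S =>
    mul_nonneg (Finset.prod_nonneg fun _ _ => hp_pos.le)
      (Finset.prod_nonneg fun _ _ => hq_nonneg)
  set E : Finset V → Finset (Sym2 V) :=
    fun S => J.edgeFinset.filter (fun e => e ∈ (G S).edgeSet) with hEdef
  -- counting edges of the sampled subgraph
  have hEcnt : ∀ S, ((G S).edgeSet.ncard : ℕ) = (E S).card := by
    intro S
    have : (G S).edgeSet = ↑(E S) := by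
      ext e
      simp only [hEdef, Finset.coe_filter, Set.mem_setOf_eq, SimpleGraph.mem_edgeFinset]
      exact ⟨fun h => ⟨SimpleGraph.Subgraph.edgeSet_subset _ h, h⟩, fun h => h.2⟩
    rw [this, Set.ncard_coe_finset]
  -- per-sample bound from the hypothesis
  have hβS : ∀ S : Finset V, ((E S).card : ℝ) ≤ β * S.card := by
    intro S
    rcases S.eq_empty_or_nonempty with h | h
    · subst h
      have hE0 : E ∅ = ∅ := by
        ext e
        induction e using Sym2.ind with
        | _ i j =>
          simp [hEdef, SimpleGraph.Subgraph.mem_edgeSet, hG, stmt7Sub]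
      simp [hE0]
    · have h1 := hsub (G S)
        (fun i j hadj ℓ hℓ hmem => hadj.2.2.2.1 ℓ hℓ (by exact_mod_cast hmem))
        (by exact_mod_cast Finset.coe_nonempty.mpr h)
      calc ((E S).card : ℝ) = ((G S).edgeSet.ncard : ℝ) := by rw [hEcnt]
        _ ≤ β * (G S).verts.ncard := h1
        _ = β * S.card := by
            have : (G S).verts = ↑S := rfl
            rw [this, Set.ncard_coe_finset]
  have key1 : ∑ S ∈ (Finset.univ : Finset V).powerset, w S * (S.card : ℝ) = p * n := by
    have step : ∀ S ∈ (Finset.univ : Finset V).powerset, w S * (S.card : ℝ)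
        = ∑ v ∈ Finset.univ,
            w S * (if ({v} : Finset V) ⊆ S ∧ ∀ b ∈ (∅ : Finset V), b ∉ S then (1:ℝ) else 0) := by
      intro S _
      rw [← Finset.mul_sum]
      congr 1
      have : ∀ v ∈ (Finset.univ : Finset V),
          (if ({v} : Finset V) ⊆ S ∧ ∀ b ∈ (∅ : Finset V), b ∉ S then (1:ℝ) else 0)
          = if v ∈ S then (1:ℝ) else 0 := by
        intro v _
        exact if_congr (by simp) rfl rfl
      rw [Finset.sum_congr rfl this, Finset.sum_ite_mem, Finset.univ_inter,
        Finset.sum_const, nsmul_eq_mul, mul_one]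
    rw [Finset.sum_congr rfl step, Finset.sum_comm]
    have inner : ∀ v ∈ (Finset.univ : Finset V),
        (∑ S ∈ (Finset.univ : Finset V).powerset,
          w S * (if ({v} : Finset V) ⊆ S ∧ ∀ b ∈ (∅ : Finset V), b ∉ S then (1:ℝ) else 0)) = p := by
      intro v _
      have h2 : (∑ S ∈ (Finset.univ : Finset V).powerset,
          w S * (if ({v} : Finset V) ⊆ S ∧ ∀ b ∈ (∅ : Finset V), b ∉ S then (1:ℝ) else 0))
          = p ^ ({v} : Finset V).card * q ^ (∅ : Finset V).card := by
        rw [← sumA p q hpq ({v} : Finset V) (∅ : Finset V) (Finset.disjoint_empty_right _)]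
      rw [h2]; simp
    rw [Finset.sum_congr rfl inner, Finset.sum_const, Finset.card_univ, nsmul_eq_mul, ← hn,
      mul_comm]


  have key2 : (J.edgeFinset.card : ℝ) * (p^2 * q^N)
      ≤ ∑ S ∈ (Finset.univ : Finset V).powerset, w S * ((E S).card : ℝ) := by
    have expand : ∀ S ∈ (Finset.univ : Finset V).powerset, w S * ((E S).card : ℝ)
        = ∑ e ∈ J.edgeFinset, w S * (if e ∈ (G S).edgeSet then (1:ℝ) else 0) := by
      intro S _
      rw [← Finset.mul_sum]
      congr 1
      rw [hEdef]
      push_cast [Finset.card_filter]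
      rfl
    rw [Finset.sum_congr rfl expand, Finset.sum_comm]
    have per_edge : ∀ e ∈ J.edgeFinset, (p^2 * q^N : ℝ)
        ≤ ∑ S ∈ (Finset.univ : Finset V).powerset,
            w S * (if e ∈ (G S).edgeSet then (1:ℝ) else 0) := by
      intro e
      induction e using Sym2.ind with
      | _ i j =>
        intro he
        have hij : J.Adj i j := SimpleGraph.mem_edgeFinset.mp he
        set B : Finset V := (Set.toFinite (R i j)).toFinset with hB
        have hBcard : B.card = (R i j).ncard := by
          rw [hB, ← Set.ncard_eq_toFinset_card]
        have hdisj : Disjoint ({i, j} : Finset V) B := by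
          rw [Finset.disjoint_left]
          intro a ha haB
          rw [hB, Set.Finite.mem_toFinset] at haB
          rw [Finset.mem_insert, Finset.mem_singleton] at ha
          rcases ha with ha | ha
          · rw [ha] at haB; exact (hnotin i j hij).1 haB
          · rw [ha] at haB; exact (hnotin i j hij).2 haB
        have hA2 : ({i, j} : Finset V).card = 2 := by
          rw [Finset.card_insert_of_notMem (by simp [hij.ne]), Finset.card_singleton]
        have hcond : ∀ S : Finset V,
            (s(i,j) ∈ (G S).edgeSet ↔ (({i,j} : Finset V) ⊆ S ∧ ∀ b ∈ B, b ∉ S)) := by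
          intro S
          rw [SimpleGraph.Subgraph.mem_edgeSet]
          constructor
          · rintro ⟨-, hi, hj, hR, -⟩
            refine ⟨Finset.insert_subset hi (Finset.singleton_subset_iff.mpr hj), ?_⟩
            intro b hb
            exact hR b (by rwa [hB, Set.Finite.mem_toFinset] at hb)
          · rintro ⟨hsub', hBS⟩
            have hRS : ∀ ℓ ∈ R i j, ℓ ∉ S := fun ℓ hℓ =>
              hBS ℓ (by rw [hB, Set.Finite.mem_toFinset]; exact hℓ)
            exact ⟨hij, hsub' (by simp), hsub' (by simp), hRS, by rw [← hsymm]; exact hRS⟩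
        have hsum : (∑ S ∈ (Finset.univ : Finset V).powerset,
            w S * (if s(i,j) ∈ (G S).edgeSet then (1:ℝ) else 0))
            = p ^ ({i,j} : Finset V).card * q ^ B.card := by
          rw [← sumA p q hpq ({i,j} : Finset V) B hdisj]
          exact Finset.sum_congr rfl fun S _ => by rw [if_congr (hcond S) rfl rfl]
        rw [hsum, hA2]
        have : q^N ≤ q^(B.card) :=
          pow_le_pow_of_le_one hq_nonneg hq_le_one (by rw [hBcard]; exact hcard i j hij)
        nlinarith [sq_nonneg p, pow_pos hp_pos 2]
    calc (J.edgeFinset.card : ℝ) * (p^2 * q^N)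
        = ∑ _e ∈ J.edgeFinset, (p^2 * q^N : ℝ) := by
          rw [Finset.sum_const, nsmul_eq_mul]
      _ ≤ _ := Finset.sum_le_sum per_edge
  -- combine
  have main : (J.edgeFinset.card : ℝ) * (p^2 * q^N) ≤ β * (p * n) := by
    calc (J.edgeFinset.card : ℝ) * (p^2 * q^N)
        ≤ ∑ S ∈ (Finset.univ : Finset V).powerset, w S * ((E S).card : ℝ) := key2
      _ ≤ ∑ S ∈ (Finset.univ : Finset V).powerset, w S * (β * S.card) :=
          Finset.sum_le_sum fun S _ => mul_le_mul_of_nonneg_left (hβS S) (hw S)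
      _ = β * ∑ S ∈ (Finset.univ : Finset V).powerset, w S * (S.card : ℝ) := by
          rw [Finset.mul_sum]
          exact Finset.sum_congr rfl fun S _ => by ring
      _ = β * (p * n) := by rw [key1]
  -- final arithmetic
  have hq_exp : 1 ≤ Real.exp 1 * q^N := by
    rcases Nat.eq_zero_or_pos N with h0 | hNposn
    · subst h0
      simpa using Real.one_le_exp (by norm_num)
    · have hNr : (0:ℝ) < N := by exact_mod_cast hNposn
      have hqpos : 0 < q := by
        rw [hq, hp, sub_pos, div_lt_one hNpos]; linarith
      have h1 : 1/q = 1 + 1/(N:ℝ) := by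
        rw [hq, hp]; field_simp
        rw [add_sub_cancel_right, div_self hNr.ne']
      have h2 : (1 + 1/(N:ℝ)) ≤ Real.exp (1/(N:ℝ)) := by
        have := Real.add_one_le_exp (1/(N:ℝ)); linarith
      have h3 : (1/q)^N ≤ Real.exp (1/(N:ℝ)) ^ N :=
        pow_le_pow_left₀ (by positivity) (h1 ▸ h2) N
      have h4 : Real.exp (1/(N:ℝ)) ^ N = Real.exp 1 := by
        rw [← Real.exp_nat_mul]
        congr 1
        field_simp
      rw [h4, div_pow, one_pow, div_le_iff₀ (pow_pos hqpos N)] at h3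
      linarith
  have hqN_pos : 0 < q^N := by
    nlinarith [Real.exp_pos 1, pow_nonneg hq_nonneg N]
  have hfin : 0 < p^2 * q^N := mul_pos (pow_pos hp_pos 2) hqN_pos
  have hp1 : ((N:ℝ) + 1) * p = 1 := by
    rw [hp]; field_simp
  have hEeq : (J.edgeSet.ncard : ℝ) = (J.edgeFinset.card : ℝ) := by
    rw [← SimpleGraph.coe_edgeFinset, Set.ncard_coe_finset]
  rw [hEeq]
  have hstep : β * (p * n) ≤ (β * Real.exp 1 * ((N:ℝ) + 1) * n) * (p^2 * q^N) := by
    have h := mul_le_mul_of_nonneg_left hq_exp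
      (show (0:ℝ) ≤ β * p * n by positivity)
    calc β * (p * n) = β * p * (n:ℝ) * 1 := by ring
      _ ≤ β * p * (n:ℝ) * (Real.exp 1 * q^N) := h
      _ = (β * Real.exp 1 * ((N:ℝ) + 1) * n) * (p^2 * q^N) := by
          linear_combination (-(β * p * (n:ℝ) * (Real.exp 1 * q^N))) * hp1
  exact le_of_mul_le_mul_right (main.trans hstep) hfin
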